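/- For all real numbers a, b > 0, one has (a − b)(log a − log b) ≥ 4(√a − √b)². -/

import Mathlib

lemma key_tanh (x : ℝ) (hx : 1 ≤ x) : 2 * (x - 1) ≤ (x + 1) * Real.log x := by
  set f : ℝ → ℝ := fun y => (y + 1) * Real.log y - 2 * (y - 1) with hf
  have hderiv : ∀ y : ℝ, 0 < y → HasDerivAt f (Real.log y + (y + 1) * y⁻¹ - 2) y := by
    intro y hy
    have h1 : HasDerivAt (fun y : ℝ => (y + 1) * Real.log y)
        (1 * Real.log y + (y + 1) * y⁻¹) y :=
      ((hasDerivAt_id y).add_const 1).mul (Real.hasDerivAt_log hy.ne')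
    have h2 : HasDerivAt (fun y : ℝ => 2 * (y - 1)) 2 y := by
      simpa using ((hasDerivAt_id y).sub_const 1).const_mul 2
    exact (h1.sub h2).congr_deriv (by ring)
  have hmono : MonotoneOn f (Set.Ici (1:ℝ)) := by
    apply monotoneOn_of_deriv_nonneg (convex_Ici 1)
    · apply ContinuousOn.sub
      · exact (continuousOn_id.add continuousOn_const).mul
          (Real.continuousOn_log.mono (by intro y hy; simp at hy ⊢; linarith))
      · exact (continuousOn_const.mul (continuousOn_id.sub continuousOn_const))
    · intro y hy
      rw [interior_Ici] at hy
      exact (hderiv y (by linarith [Set.mem_Ioi.mp hy])).differentiableAt.differentiableWithinAt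
    · intro y hy
      rw [interior_Ici] at hy
      have hy1 : (1:ℝ) < y := hy
      have hy0 : (0:ℝ) < y := by linarith
      rw [(hderiv y hy0).deriv]
      have hlog : 1 - y⁻¹ ≤ Real.log y := by
        have := Real.add_one_le_exp (Real.log y⁻¹)
        rw [Real.exp_log (by positivity)] at this
        rw [Real.log_inv] at this
        linarith
      have : (y + 1) * y⁻¹ = 1 + y⁻¹ := by field_simp
      rw [this]; linarith
  have := hmono (Set.mem_Ici.mpr le_rfl) (Set.mem_Ici.mpr hx) hx
  simp only [hf, Real.log_one] at this
  linarith

lemma main_aux (a b : ℝ) (ha : 0 < a) (hb : 0 < b) (hba : b ≤ a) :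
    (a - b) * (Real.log a - Real.log b) ≥ 4 * (Real.sqrt a - Real.sqrt b) ^ 2 := by
  set s := Real.sqrt a with hs
  set t := Real.sqrt b with ht
  have hs0 : 0 < s := Real.sqrt_pos.mpr ha
  have ht0 : 0 < t := Real.sqrt_pos.mpr hb
  have hts : t ≤ s := Real.sqrt_le_sqrt hba
  have hsa : s ^ 2 = a := Real.sq_sqrt ha.le
  have htb : t ^ 2 = b := Real.sq_sqrt hb.le
  have hloga : Real.log a = 2 * Real.log s := by
    rw [← hsa, Real.log_pow]; push_cast; ring
  have hlogb : Real.log b = 2 * Real.log t := by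
    rw [← htb, Real.log_pow]; push_cast; ring
  have hkey := key_tanh (s / t) ((one_le_div ht0).mpr hts)
  have hlogst : Real.log (s / t) = Real.log s - Real.log t :=
    Real.log_div hs0.ne' ht0.ne'
  rw [hlogst] at hkey
  have hkey' : 2 * (s - t) ≤ (s + t) * (Real.log s - Real.log t) := by
    have h := mul_le_mul_of_nonneg_left hkey ht0.le
    have e1 : t * (2 * (s / t - 1)) = 2 * (s - t) := by field_simp
    have e2 : t * ((s / t + 1) * (Real.log s - Real.log t))
        = (s + t) * (Real.log s - Real.log t) := by field_simp
    rw [e1, e2] at h; exact h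
  have hst : 0 ≤ s - t := by linarith
  have hlog_nonneg : 0 ≤ Real.log s - Real.log t := by
    have := Real.log_le_log ht0 hts
    linarith
  rw [hloga, hlogb, ← hsa, ← htb]
  nlinarith [mul_le_mul hkey' (le_refl (s - t)) hst (by nlinarith : 0 ≤ (s + t) * (Real.log s - Real.log t))]

theorem stmt_0 (a b : ℝ) (ha : 0 < a) (hb : 0 < b) :
    (a - b) * (Real.log a - Real.log b) ≥ 4 * (Real.sqrt a - Real.sqrt b) ^ 2 := by
  rcases le_total b a with h | h
  · exact main_aux a b ha hb h
  · have := main_aux b a hb ha h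
    nlinarith [this]
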